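/- If x₀ ≠ y₀, then any choice of maximum points x_ε of u_ε on Ω_ε converges to y₀ as ε → 0⁺. -/

import Mathlib

open Real Set Metric Filter Topology

noncomputable section

abbrev E2 := EuclideanSpace ℝ (Fin 2)

/-- Second partial derivative `∂²u/∂xᵢ∂xⱼ` at `x`. -/
noncomputable def pd2 (u : E2 → ℝ) (x : E2) (i j : Fin 2) : ℝ :=
  fderiv ℝ (fun y => fderiv ℝ u y (EuclideanSpace.single j 1)) x (EuclideanSpace.single i 1)

/-- The Hessian matrix `D²u(x)`. -/
noncomputable def Hess (u : E2 → ℝ) (x : E2) : Matrix (Fin 2) (Fin 2) ℝ :=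
  Matrix.of fun i j => pd2 u x i j

/-- The Laplacian `Δu(x)`. -/
noncomputable def lap (u : E2 → ℝ) (x : E2) : ℝ := pd2 u x 0 0 + pd2 u x 1 1

/-- The largest eigenvalue of a symmetric 2×2 real matrix. -/
noncomputable def lambdaMax (M : Matrix (Fin 2) (Fin 2) ℝ) : ℝ :=
  ((M 0 0 + M 1 1) + Real.sqrt ((M 0 0 - M 1 1) ^ 2 + (M 0 1 + M 1 0) ^ 2)) / 2

/-- `u` is the torsion function of `U`: continuous up to the boundary, `C²` inside,
`Δu = -1` in `U` and `u = 0` on `∂U`. -/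
def IsTorsion (U : Set E2) (u : E2 → ℝ) : Prop :=
  ContinuousOn u (closure U) ∧ (∀ x ∈ U, ContDiffAt ℝ 2 u x) ∧
    (∀ x ∈ U, lap u x = -1) ∧ (∀ x ∈ frontier U, u x = 0)


lemma pd2_slot_diff {u : E2 → ℝ} {x : E2} (h : ContDiffAt ℝ 2 u x) (j : Fin 2) :
    DifferentiableAt ℝ (fun y => fderiv ℝ u y (EuclideanSpace.single j 1)) x := by
  have h1 : ContDiffAt ℝ 1 (fderiv ℝ u) x := h.fderiv_right (by norm_num)
  have h2 : DifferentiableAt ℝ (fderiv ℝ u) x := h1.differentiableAt (by norm_num)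
  exact ((ContinuousLinearMap.apply ℝ ℝ (EuclideanSpace.single j 1)).differentiableAt).comp x h2

lemma eventually_differentiableAt {u : E2 → ℝ} {x : E2} (h : ContDiffAt ℝ 2 u x) :
    ∀ᶠ y in 𝓝 x, DifferentiableAt ℝ u y :=
  (h.eventually (by norm_num)).mono fun y hy => hy.differentiableAt (by norm_num)

lemma pd2_smul_add {u v : E2 → ℝ} {x : E2} (a b : ℝ)
    (hu : ContDiffAt ℝ 2 u x) (hv : ContDiffAt ℝ 2 v x) (i j : Fin 2) :
    pd2 (fun y => a * u y + b * v y) x i j = a * pd2 u x i j + b * pd2 v x i j := by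
  have hslot : (fun y => fderiv ℝ (fun z => a * u z + b * v z) y (EuclideanSpace.single j 1))
      =ᶠ[𝓝 x] (fun y => a * (fderiv ℝ u y (EuclideanSpace.single j 1))
        + b * (fderiv ℝ v y (EuclideanSpace.single j 1))) := by
    filter_upwards [eventually_differentiableAt hu, eventually_differentiableAt hv] with y hy1 hy2
    rw [fderiv_fun_add ((hy1.const_mul a)) ((hy2.const_mul b)), fderiv_const_mul hy1,
      fderiv_const_mul hy2]
    simp
  unfold pd2
  rw [hslot.fderiv_eq, fderiv_fun_add ((pd2_slot_diff hu j).const_mul a)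
    ((pd2_slot_diff hv j).const_mul b), fderiv_const_mul (pd2_slot_diff hu j),
    fderiv_const_mul (pd2_slot_diff hv j)]
  simp

lemma pd2_const {c : ℝ} {x : E2} (i j : Fin 2) : pd2 (fun _ => c) x i j = 0 := by
  unfold pd2
  have : (fun y : E2 => fderiv ℝ (fun _ : E2 => c) y (EuclideanSpace.single j 1))
      = fun _ => 0 := by ext y; rw [fderiv_fun_const]; simp
  rw [this, fderiv_fun_const]; simp

lemma lap_smul_add {u v : E2 → ℝ} {x : E2} (a b : ℝ)
    (hu : ContDiffAt ℝ 2 u x) (hv : ContDiffAt ℝ 2 v x) :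
    lap (fun y => a * u y + b * v y) x = a * lap u x + b * lap v x := by
  unfold lap; rw [pd2_smul_add a b hu hv, pd2_smul_add a b hu hv]; ring

lemma lap_sub {u v : E2 → ℝ} {x : E2}
    (hu : ContDiffAt ℝ 2 u x) (hv : ContDiffAt ℝ 2 v x) :
    lap (fun y => u y - v y) x = lap u x - lap v x := by
  have := lap_smul_add 1 (-1) hu hv
  simp only [one_mul, neg_one_mul] at this
  simpa [sub_eq_add_neg] using this


lemma second_deriv_test {w : E2 → ℝ} {p : E2} (h : ContDiffAt ℝ 2 w p)
    (hmax : IsLocalMax w p) (i : Fin 2) : pd2 w p i i ≤ 0 := by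
  by_contra hpos
  push_neg at hpos
  set v : E2 := EuclideanSpace.single i 1 with hv
  set L : ℝ → E2 := fun t => p + t • v with hLdef
  have hL0 : L 0 = p := by simp [hLdef]
  have hL : ∀ t : ℝ, HasDerivAt L v t := fun t => by
    simpa [hLdef] using ((hasDerivAt_id t).smul_const v).const_add p
  have hLcont : Continuous L := continuous_const.add (continuous_id.smul continuous_const)
  have hLt : Tendsto L (𝓝 0) (𝓝 p) := by
    rw [← hL0]; exact (hLcont.tendsto 0)
  set g : ℝ → ℝ := fun t => w (L t) with hgdef
  set g1 : ℝ → ℝ := fun t => fderiv ℝ w (L t) v with hg1def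
  -- e1 : eventually HasDerivAt g (g1 t) t, and g t ≤ g 0
  have hev : ∀ᶠ t in 𝓝 (0:ℝ), ContDiffAt ℝ 2 w (L t) := hLt.eventually (h.eventually (by norm_num))
  have e1 : ∀ᶠ t in 𝓝 (0:ℝ), HasDerivAt g (g1 t) t := by
    filter_upwards [hev] with t ht
    have hd : DifferentiableAt ℝ w (L t) := ht.differentiableAt (by norm_num)
    exact (hd.hasFDerivAt.comp_hasDerivAt t (hL t))
  have e3 : ∀ᶠ t in 𝓝 (0:ℝ), g t ≤ g 0 := by
    have := hLt.eventually hmax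
    simpa [hgdef, hL0] using this
  -- e2 : HasDerivAt g1 (pd2 w p i i) 0
  have hD : HasFDerivAt (fun y => fderiv ℝ w y v) (fderiv ℝ (fun y => fderiv ℝ w y v) p) p :=
    (pd2_slot_diff h i).hasFDerivAt
  have e2 : HasDerivAt g1 (pd2 w p i i) 0 := by
    rw [← hL0] at hD
    have h2 := hD.comp_hasDerivAt 0 (hL 0)
    rw [hL0] at h2
    exact h2
  have hg10 : g1 0 = 0 := by
    simp [hg1def, hL0, hmax.fderiv_eq_zero]
  -- slope positive near 0+
  have hslope : Tendsto (slope g1 0) (𝓝[≠] (0:ℝ)) (𝓝 (pd2 w p i i)) :=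
    hasDerivAt_iff_tendsto_slope.1 e2
  have E2' : ∀ᶠ t in 𝓝[>] (0:ℝ), 0 < g1 t := by
    have h1 : ∀ᶠ t in 𝓝[≠] (0:ℝ), 0 < slope g1 0 t :=
      hslope.eventually (eventually_gt_nhds hpos)
    have h2 : ∀ᶠ t in 𝓝[>] (0:ℝ), 0 < slope g1 0 t :=
      h1.filter_mono (nhdsWithin_mono 0 (fun t ht => ne_of_gt ht))
    filter_upwards [h2, self_mem_nhdsWithin] with t ht ht'
    have : slope g1 0 t = g1 t / t := by simp [slope_def_field, hg10]
    rw [this] at ht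
    have htpos : (0:ℝ) < t := ht'
    exact (div_pos_iff.1 ht).elim (fun hh => hh.1) (fun hh => absurd htpos (not_lt.2 hh.2.le))
  -- extract intervals
  obtain ⟨a1, ha1, Ha1⟩ := Metric.eventually_nhds_iff.1 (e1.and e3)
  obtain ⟨I, hI, hIsub⟩ := mem_nhdsGT_iff_exists_Ioo_subset.1 E2'
  set b : ℝ := min a1 I / 2 with hbdef
  have hminpos : 0 < min a1 I := lt_min ha1 hI
  have hb0 : 0 < b := by rw [hbdef]; positivity
  have hblt1 : b < a1 := by
    calc b ≤ a1 / 2 := by rw [hbdef]; gcongr; exact min_le_left _ _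
    _ < a1 := by linarith
  have hbltI : b < I := by
    calc b ≤ I / 2 := by rw [hbdef]; gcongr; exact min_le_right _ _
    _ < I := by linarith [hI.out]
  have hmono : StrictMonoOn g (Icc 0 b) := by
    apply strictMonoOn_of_deriv_pos (convex_Icc 0 b)
    · intro t ht
      have hdist : dist t 0 < a1 := by
        rw [Real.dist_eq, sub_zero, abs_of_nonneg ht.1]
        exact lt_of_le_of_lt ht.2 hblt1
      exact ((Ha1 hdist).1.continuousAt).continuousWithinAt
    · intro t ht
      rw [interior_Icc] at ht
      have hdist : dist t 0 < a1 := by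
        rw [Real.dist_eq, sub_zero, abs_of_nonneg ht.1.le]
        exact lt_trans ht.2 hblt1
      rw [(Ha1 hdist).1.deriv]
      exact hIsub ⟨ht.1, lt_trans ht.2 hbltI⟩
  have h1 : g 0 < g b := hmono ⟨le_refl 0, hb0.le⟩ ⟨hb0.le, le_refl b⟩ hb0
  have h2 : g b ≤ g 0 := by
    have hdist : dist b 0 < a1 := by rw [Real.dist_eq, sub_zero, abs_of_nonneg hb0.le]; exact hblt1
    exact (Ha1 hdist).2
  linarith

/-- The quadratic function `y ↦ (y 0)²`. -/
noncomputable def qfun : E2 → ℝ := fun y => y 0 * y 0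

lemma qfun_proj (y : E2) : qfun y = (EuclideanSpace.proj (0 : Fin 2)) y * (EuclideanSpace.proj (0 : Fin 2)) y := rfl

lemma qfun_contDiff : ContDiff ℝ 2 qfun := by
  have h : ContDiff ℝ 2 (fun y : E2 => (EuclideanSpace.proj (0 : Fin 2)) y) :=
    (EuclideanSpace.proj (0 : Fin 2) : E2 →L[ℝ] ℝ).contDiff
  exact h.mul h

lemma qfun_hasFDerivAt (y : E2) :
    HasFDerivAt qfun ((2 * y 0) • (EuclideanSpace.proj (0 : Fin 2) : E2 →L[ℝ] ℝ)) y := by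
  have h := (EuclideanSpace.proj (0:Fin 2) : E2 →L[ℝ] ℝ).hasFDerivAt (x := y)
  have := h.mul h
  refine this.congr_fderiv ?_
  ext z
  simp [two_mul]
  ring

lemma qfun_fderiv (y : E2) :
    fderiv ℝ qfun y = (2 * y 0) • (EuclideanSpace.proj (0 : Fin 2) : E2 →L[ℝ] ℝ) :=
  (qfun_hasFDerivAt y).fderiv

lemma proj_single (i j : Fin 2) :
    (EuclideanSpace.proj (i : Fin 2) : E2 →L[ℝ] ℝ) (EuclideanSpace.single j 1)
      = if i = j then 1 else 0 := by
  simp [EuclideanSpace.single_apply]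

lemma lap_qfun (x : E2) : lap qfun x = 2 := by
  have h00 : pd2 qfun x 0 0 = 2 := by
    have hslot : (fun y : E2 => fderiv ℝ qfun y (EuclideanSpace.single 0 1))
        = fun y : E2 => 2 * (EuclideanSpace.proj (0 : Fin 2)) y := by
      ext y
      rw [qfun_fderiv]
      simp [proj_single]
    have hF : HasFDerivAt (fun y : E2 => 2 * (EuclideanSpace.proj (0 : Fin 2)) y)
        ((2:ℝ) • (EuclideanSpace.proj (0 : Fin 2) : E2 →L[ℝ] ℝ)) x := by
      simpa using ((EuclideanSpace.proj (0 : Fin 2) : E2 →L[ℝ] ℝ).hasFDerivAt (x := x)).const_mul (2:ℝ)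
    rw [pd2, hslot, hF.fderiv]
    simp [proj_single]
  have h11 : pd2 qfun x 1 1 = 0 := by
    have hslot : (fun y : E2 => fderiv ℝ qfun y (EuclideanSpace.single 1 1))
        = fun _ : E2 => (0:ℝ) := by
      ext y
      rw [qfun_fderiv]
      simp [proj_single]
    rw [pd2, hslot, fderiv_fun_const]
    simp
  rw [lap, h00, h11]; norm_num

lemma qfun_nonneg (y : E2) : 0 ≤ qfun y := mul_self_nonneg _

lemma qfun_le_sq_norm (y : E2) : qfun y ≤ ‖y‖ ^ 2 := by
  have h : ‖y‖ ^ 2 = (y 0) ^ 2 + (y 1) ^ 2 := by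
    rw [EuclideanSpace.norm_eq, Real.sq_sqrt (by positivity)]
    simp [Fin.sum_univ_two, sq_abs]
  rw [h, qfun]
  nlinarith [sq_nonneg (y 1)]

/-- Weak maximum principle for subharmonic functions on bounded open sets in the plane. -/
lemma max_principle {U : Set E2} (hUo : IsOpen U) (hUb : Bornology.IsBounded U)
    {w : E2 → ℝ} (hwc : ContinuousOn w (closure U))
    (hw2 : ∀ x ∈ U, ContDiffAt ℝ 2 w x) (hlap : ∀ x ∈ U, 0 ≤ lap w x)
    {m : ℝ} (hfr : ∀ y ∈ frontier U, w y ≤ m) :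
    ∀ x ∈ closure U, w x ≤ m := by
  intro x hx
  obtain ⟨R, hR⟩ := hUb.closure.subset_closedBall 0
  set C : ℝ := R ^ 2 + 1 with hC
  have hC1 : 1 ≤ C := by nlinarith [sq_nonneg R]
  have hCpos : 0 < C := by linarith
  have hqC : ∀ y ∈ closure U, qfun y ≤ C := by
    intro y hy
    have h1 : ‖y‖ ≤ R := by simpa using hR hy
    have h2 : ‖y‖ ^ 2 ≤ R ^ 2 := by nlinarith [norm_nonneg y]
    linarith [qfun_le_sq_norm y]
  have key : ∀ δ : ℝ, 0 < δ → w x ≤ m + δ * C := by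
    intro δ hδ
    set wδ : E2 → ℝ := fun y => w y + δ * qfun y with hwδ
    have hwδc : ContinuousOn wδ (closure U) :=
      hwc.add ((qfun_contDiff.continuous.const_smul δ).continuousOn)
    have hcpt : IsCompact (closure U) := hUb.isCompact_closure
    obtain ⟨p, hp, hpmax⟩ := hcpt.exists_isMaxOn ⟨x, hx⟩ hwδc
    have hpU : p ∉ U := by
      intro hpU
      have hloc : IsLocalMax wδ p := hpmax.isLocalMax (mem_nhds_iff.2 ⟨U, subset_closure, hUo, hpU⟩)
      have hcd : ContDiffAt ℝ 2 wδ p := (hw2 p hpU).add ((qfun_contDiff.contDiffAt).const_smul δ)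
      have h0 : pd2 wδ p 0 0 ≤ 0 := second_deriv_test hcd hloc 0
      have h1 : pd2 wδ p 1 1 ≤ 0 := second_deriv_test hcd hloc 1
      have hl : lap wδ p = 1 * lap w p + δ * lap qfun p := by
        have := lap_smul_add 1 δ (hw2 p hpU) qfun_contDiff.contDiffAt (x := p)
        simpa [one_mul] using this
      rw [lap_qfun] at hl
      have : lap wδ p ≤ 0 := by rw [lap]; linarith
      have hwp := hlap p hpU
      rw [hl] at this
      linarith
    have hpfr : p ∈ frontier U := by
      rw [frontier, hUo.interior_eq]
      exact ⟨hp, hpU⟩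
    calc w x ≤ wδ x := by simp [hwδ]; nlinarith [qfun_nonneg x]
    _ ≤ wδ p := hpmax hx
    _ = w p + δ * qfun p := rfl
    _ ≤ m + δ * C := by
        have := hfr p hpfr
        have := hqC p hp
        nlinarith
  by_contra hcon
  push_neg at hcon
  have hδp : 0 < (w x - m) / (2 * C) := div_pos (by linarith) (by positivity)
  have := key ((w x - m) / (2 * C)) hδp
  have heq : (w x - m) / (2 * C) * C = (w x - m) / 2 := by field_simp
  rw [heq] at this
  linarith

/-! ### The logarithmic barrier -/

noncomputable def Qc (c : E2) : E2 → ℝ := fun y => (y 0 - c 0) ^ 2 + (y 1 - c 1) ^ 2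

noncomputable def DQ (c : E2) (y : E2) : E2 →L[ℝ] ℝ :=
  (2 * (y 0 - c 0)) • (EuclideanSpace.proj (0 : Fin 2) : E2 →L[ℝ] ℝ)
    + (2 * (y 1 - c 1)) • (EuclideanSpace.proj (1 : Fin 2) : E2 →L[ℝ] ℝ)

noncomputable def logQ (c : E2) : E2 → ℝ := fun y => Real.log (Qc c y)

lemma coord_hasFDerivAt (c : E2) (i : Fin 2) (y : E2) :
    HasFDerivAt (fun z : E2 => z i - c i)
      (EuclideanSpace.proj (i : Fin 2) : E2 →L[ℝ] ℝ) y :=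
  ((EuclideanSpace.proj (i : Fin 2) : E2 →L[ℝ] ℝ).hasFDerivAt (x := y)).sub_const (c i)

lemma coord_sq_hasFDerivAt (c : E2) (i : Fin 2) (y : E2) :
    HasFDerivAt (fun z : E2 => (z i - c i) ^ 2)
      ((2 * (y i - c i)) • (EuclideanSpace.proj (i : Fin 2) : E2 →L[ℝ] ℝ)) y := by
  have h := (hasDerivAt_pow 2 (y i - c i)).comp_hasFDerivAt y (coord_hasFDerivAt c i y)
  simpa [pow_one, Function.comp_def] using h

lemma Qc_hasFDerivAt (c : E2) (y : E2) : HasFDerivAt (Qc c) (DQ c y) y :=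
  (coord_sq_hasFDerivAt c 0 y).add (coord_sq_hasFDerivAt c 1 y)

lemma Qc_contDiff (c : E2) : ContDiff ℝ 2 (Qc c) := by
  have h : ∀ i : Fin 2, ContDiff ℝ 2 (fun z : E2 => (z i - c i) ^ 2) := by
    intro i
    have h1 : ContDiff ℝ 2 (fun z : E2 => (EuclideanSpace.proj (i : Fin 2) : E2 →L[ℝ] ℝ) z - c i) :=
      ((EuclideanSpace.proj (i : Fin 2) : E2 →L[ℝ] ℝ).contDiff).sub contDiff_const
    exact h1.pow 2
  exact (h 0).add (h 1)

lemma Qc_nonneg (c y : E2) : 0 ≤ Qc c y := by unfold Qc; positivity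

lemma Qc_eq_dist (c y : E2) : Qc c y = dist y c ^ 2 := by
  rw [dist_eq_norm, EuclideanSpace.norm_eq, Real.sq_sqrt (by positivity)]
  simp only [Fin.sum_univ_two, sq_abs, Real.norm_eq_abs]
  have h0 : (y - c) 0 = y 0 - c 0 := rfl
  have h1 : (y - c) 1 = y 1 - c 1 := rfl
  rw [h0, h1, Qc]

lemma DQ_single (c y : E2) (j : Fin 2) :
    DQ c y (EuclideanSpace.single j 1) = 2 * (y j - c j) := by
  fin_cases j <;> simp [DQ, proj_single]

lemma logQ_contDiffAt {c x : E2} (hx : Qc c x ≠ 0) : ContDiffAt ℝ 2 (logQ c) x :=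
  ((Qc_contDiff c).contDiffAt).log hx

lemma logQ_fderiv_ev {c x : E2} (hx : Qc c x ≠ 0) :
    ∀ᶠ y in 𝓝 x, fderiv ℝ (logQ c) y = (Qc c y)⁻¹ • DQ c y := by
  have hev : ∀ᶠ y in 𝓝 x, Qc c y ≠ 0 :=
    ((Qc_contDiff c).continuous.continuousAt).eventually_ne hx
  filter_upwards [hev] with y hy
  exact ((Qc_hasFDerivAt c y).log hy).fderiv

lemma pd2_logQ {c x : E2} (hx : Qc c x ≠ 0) (i j : Fin 2) :
    pd2 (logQ c) x i j =
      2 * (x j - c j) * (-((Qc c x ^ 2)⁻¹) * (2 * (x i - c i)))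
        + (Qc c x)⁻¹ * (if j = i then 2 else 0) := by
  have hslot : (fun y => fderiv ℝ (logQ c) y (EuclideanSpace.single j 1))
      =ᶠ[𝓝 x] (fun y => (2 * (y j - c j)) * (Qc c y)⁻¹) := by
    filter_upwards [logQ_fderiv_ev hx] with y hy
    rw [hy]
    simp [DQ_single, mul_comm]
  -- derivative of the slot function
  have hN : HasFDerivAt (fun y : E2 => 2 * (y j - c j))
      ((2:ℝ) • (EuclideanSpace.proj (j : Fin 2) : E2 →L[ℝ] ℝ)) x := by
    simpa using (coord_hasFDerivAt c j x).const_mul (2:ℝ)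
  have hQinv : HasFDerivAt (fun y : E2 => (Qc c y)⁻¹)
      ((-((Qc c x) ^ 2)⁻¹) • DQ c x) x :=
    (hasDerivAt_inv hx).comp_hasFDerivAt x (Qc_hasFDerivAt c x)
  have hprod := hN.fun_mul hQinv
  rw [pd2, hslot.fderiv_eq, hprod.fderiv]
  simp [DQ_single, proj_single]

lemma lap_logQ {c x : E2} (hx : Qc c x ≠ 0) : lap (logQ c) x = 0 := by
  rw [lap, pd2_logQ hx 0 0, pd2_logQ hx 1 1]
  simp only [eq_self_iff_true, if_true]
  have hQ : Qc c x = (x 0 - c 0) ^ 2 + (x 1 - c 1) ^ 2 := rfl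
  field_simp
  ring_nf
  nlinarith [hQ]

lemma lap_const_fun (c : ℝ) (x : E2) : lap (fun _ => c) x = 0 := by
  rw [lap, pd2_const, pd2_const]; norm_num

lemma lap_const_mul {u : E2 → ℝ} {x : E2} (a : ℝ) (hu : ContDiffAt ℝ 2 u x) :
    lap (fun y => a * u y) x = a * lap u x := by
  have h : (fun y => a * u y) = (fun y => a * u y + 0 * (fun _ : E2 => (0:ℝ)) y) := by
    funext y; simp
  rw [h, lap_smul_add a 0 hu contDiffAt_const]
  simp

lemma lap_const_sub {u : E2 → ℝ} {x : E2} (a : ℝ) (hu : ContDiffAt ℝ 2 u x) :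
    lap (fun y => a - u y) x = - lap u x := by
  have h : (fun y => a - u y) = (fun y => (-1) * u y + a * (fun _ : E2 => (1:ℝ)) y) := by
    funext y; simp; ring
  rw [h, lap_smul_add (-1) a hu contDiffAt_const, lap_const_fun]
  ring

/-- If `x₀ ≠ y₀`, the maximum points `x_ε` of `u_ε` converge to `y₀` as `ε → 0⁺`. -/
theorem max_points_tend_to_y0
    (Ω : Set E2) (hΩo : IsOpen Ω) (hΩb : Bornology.IsBounded Ω) (hΩc : Convex ℝ Ω)
    (u₀ : E2 → ℝ) (h₀ : IsTorsion Ω u₀) (h₀pos : ∀ x ∈ Ω, 0 < u₀ x)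
    (y₀ : E2) (hy₀ : y₀ ∈ Ω) (hy₀crit : gradient u₀ y₀ = 0)
    (hy₀uniq : ∀ x ∈ Ω, gradient u₀ x = 0 → x = y₀)
    (hy₀max : IsMaxOn u₀ Ω y₀)
    (x₀ : E2) (hx₀ : x₀ ∈ Ω) (hne : x₀ ≠ y₀)
    (ε₁ : ℝ) (hε₁ : 0 < ε₁) (hball : closedBall x₀ ε₁ ⊆ Ω)
    (uε : ℝ → E2 → ℝ) (xε : ℝ → E2)
    (huε : ∀ ε ∈ Ioo (0:ℝ) ε₁, IsTorsion (Ω \ closedBall x₀ ε) (uε ε))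
    (hxε : ∀ ε ∈ Ioo (0:ℝ) ε₁, xε ε ∈ Ω \ closedBall x₀ ε ∧
      IsMaxOn (uε ε) (Ω \ closedBall x₀ ε) (xε ε)) :
    Tendsto xε (𝓝[>] (0:ℝ)) (𝓝 y₀) := by
  obtain ⟨h₀c, h₀2, h₀lap, h₀fr⟩ := h₀
  set M : ℝ := u₀ y₀ with hMdef
  have hM : 0 < M := h₀pos y₀ hy₀
  have hu₀bounds : ∀ z ∈ closure Ω, 0 ≤ u₀ z ∧ u₀ z ≤ M := by
    intro z hz
    by_cases hzΩ : z ∈ Ω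
    · exact ⟨(h₀pos z hzΩ).le, isMaxOn_iff.mp hy₀max z hzΩ⟩
    · have hzfr : z ∈ frontier Ω := ⟨hz, by rwa [hΩo.interior_eq]⟩
      rw [h₀fr z hzfr]
      exact ⟨le_refl 0, hM.le⟩
  have hd : 0 < dist y₀ x₀ := dist_pos.2 hne.symm
  set d : ℝ := dist y₀ x₀ with hddef
  obtain ⟨R, hRgt, hRsub⟩ := hΩb.closure.subset_closedBall_lt (max ε₁ d) x₀
  have hRd : d < R := lt_of_le_of_lt (le_max_right _ _) hRgt
  have hRε₁ : ε₁ < R := lt_of_le_of_lt (le_max_left _ _) hRgt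
  have hR0 : 0 < R := hd.trans hRd
  have hlogdR : Real.log d < Real.log R := Real.log_lt_log hd hRd
  set A : ℝ := 2 * M * (Real.log R - Real.log d) with hAdef
  have hA : 0 < A := by
    apply mul_pos (by linarith) (by linarith)
  rw [Metric.tendsto_nhds]
  intro r hr
  -- Step A : strict gap away from y₀
  have hgap : ∃ δ : ℝ, 0 < δ ∧ ∀ x ∈ Ω, r ≤ dist x y₀ → u₀ x ≤ M - δ := by
    set K := closure Ω ∩ {z : E2 | r ≤ dist z y₀} with hKdef
    have hKcl : IsClosed {z : E2 | r ≤ dist z y₀} :=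
      isClosed_le continuous_const (continuous_id.dist continuous_const)
    have hKc : IsCompact K := hΩb.isCompact_closure.inter_right hKcl
    by_cases hKne : K.Nonempty
    · obtain ⟨p, hpK, hpmax⟩ := hKc.exists_isMaxOn hKne (h₀c.mono inter_subset_left)
      have hpcl : p ∈ closure Ω := hpK.1
      have hpd : r ≤ dist p y₀ := hpK.2
      have hpltM : u₀ p < M := by
        by_cases hpΩ : p ∈ Ω
        · rcases lt_or_eq_of_le (isMaxOn_iff.mp hy₀max p hpΩ) with h | h
          · exact h
          · exfalso
            have hmax2 : IsMaxOn u₀ Ω p := isMaxOn_iff.mpr fun z hz =>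
              le_trans (isMaxOn_iff.mp hy₀max z hz) (le_of_eq h.symm)
            have hloc : IsLocalMax u₀ p := hmax2.isLocalMax (hΩo.mem_nhds hpΩ)
            have hf : fderiv ℝ u₀ p = 0 := hloc.fderiv_eq_zero
            have hg : gradient u₀ p = 0 := by rw [gradient, hf, map_zero]
            have hpy := hy₀uniq p hpΩ hg
            rw [hpy, dist_self] at hpd
            linarith
        · have hpfr : p ∈ frontier Ω := ⟨hpcl, by rwa [hΩo.interior_eq]⟩
          rw [h₀fr p hpfr]; exact hM
      refine ⟨M - u₀ p, by linarith, fun x hx hxd => ?_⟩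
      have : u₀ x ≤ u₀ p := isMaxOn_iff.mp hpmax x ⟨subset_closure hx, hxd⟩
      linarith
    · exact ⟨M, hM, fun x hx hxd => absurd ⟨subset_closure hx, hxd⟩
        fun h => hKne ⟨x, h⟩⟩
  obtain ⟨δ, hδ, hgap⟩ := hgap
  set a₃ : ℝ := Real.exp (Real.log R - A / δ) with ha₃def
  set a : ℝ := min ε₁ (min d a₃) with hadef
  have ha : 0 < a := lt_min hε₁ (lt_min hd (Real.exp_pos _))
  filter_upwards [Ioo_mem_nhdsGT_of_mem (⟨le_refl (0:ℝ), ha⟩ : (0:ℝ) ∈ Ico (0:ℝ) a)]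
    with ε hε
  have hε0 : 0 < ε := hε.1
  have hεε₁ : ε < ε₁ := lt_of_lt_of_le hε.2 (min_le_left _ _)
  have hεd : ε < d := lt_of_lt_of_le hε.2 (le_trans (min_le_right _ _) (min_le_left _ _))
  have hεa₃ : ε < a₃ := lt_of_lt_of_le hε.2 (le_trans (min_le_right _ _) (min_le_right _ _))
  have hlogε : Real.log ε ≤ Real.log R - A / δ := by
    have h1 : Real.log ε ≤ Real.log a₃ :=
      ((Real.log_le_log_iff hε0 (Real.exp_pos _)).2 hεa₃.le)
    rwa [ha₃def, Real.log_exp] at h1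
  have hAδ : 0 < A / δ := div_pos hA hδ
  have hden : 0 < Real.log R - Real.log ε := by linarith
  have hεIoo : ε ∈ Ioo (0:ℝ) ε₁ := ⟨hε0, hεε₁⟩
  obtain ⟨hεc, hε2, hεlap, hεfr⟩ := huε ε hεIoo
  obtain ⟨hxεmem, hxεmax⟩ := hxε ε hεIoo
  set U : Set E2 := Ω \ closedBall x₀ ε with hUdef
  have hUo : IsOpen U := hΩo.sdiff isClosed_closedBall
  have hUb : Bornology.IsBounded U := hΩb.subset diff_subset
  have hUsub : U ⊆ Ω := diff_subset
  have hclU : closure U ⊆ closure Ω := closure_mono diff_subset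
  have hUdist : ∀ z ∈ closure U, ε ≤ dist z x₀ := by
    have hsub : closure U ⊆ {z : E2 | ε ≤ dist z x₀} := by
      apply closure_minimal ?_ (isClosed_le continuous_const (continuous_id.dist continuous_const))
      intro z hz
      exact le_of_lt (not_le.mp fun h => hz.2 (mem_closedBall.mpr h))
    exact fun z hz => hsub hz
  have hfrU : frontier U ⊆ frontier Ω ∪ sphere x₀ ε := by
    rw [hUdef, diff_eq]
    refine subset_trans (frontier_inter_subset _ _) ?_
    intro z hz
    rcases hz with h | h
    · exact Or.inl h.1
    · right
      have := h.2
      rwa [frontier_compl, frontier_closedBall _ (ne_of_gt hε0)] at this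
  have hfrcl : frontier U ⊆ closure Ω := fun y hy => hclU (frontier_subset_closure hy)
  -- Step C : uε ≤ u₀ on closure U
  have stepC : ∀ z ∈ closure U, uε ε z ≤ u₀ z := by
    have hmp := max_principle (U := U) hUo hUb
      (w := fun z => uε ε z - u₀ z)
      (hεc.sub (h₀c.mono hclU))
      (fun z hz => (hε2 z hz).sub (h₀2 z (hUsub hz)))
      (fun z hz => by
        rw [lap_sub (hε2 z hz) (h₀2 z (hUsub hz)), hεlap z hz, h₀lap z (hUsub hz)]
        norm_num)
      (m := 0)
      (fun y hy => by
        show uε ε y - u₀ y ≤ (0:ℝ)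
        rw [hεfr y hy]
        have := (hu₀bounds y (hfrcl hy)).1
        linarith)
    intro z hz
    have h' : uε ε z - u₀ z ≤ 0 := hmp z hz
    linarith
  -- Step D : barrier estimate at y₀
  set cc : ℝ := M / (2 * Real.log R - 2 * Real.log ε) with hccdef
  have hden2 : 0 < 2 * Real.log R - 2 * Real.log ε := by linarith
  have hccpos : 0 < cc := div_pos hM hden2
  set φ : E2 → ℝ := fun z => cc * (2 * Real.log R - logQ x₀ z) with hφdef
  have hlogQdist : ∀ z : E2, logQ x₀ z = 2 * Real.log (dist z x₀) := by
    intro z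
    rw [logQ, Qc_eq_dist, Real.log_pow]
    push_cast; ring
  have hφsphere : ∀ z : E2, dist z x₀ = ε → φ z = M := by
    intro z hz
    show cc * (2 * Real.log R - logQ x₀ z) = M
    rw [hlogQdist, hz, hccdef]
    have h2 : 2 * Real.log R - 2 * Real.log ε ≠ 0 := hden2.ne'
    field_simp
  have hφnonneg : ∀ z : E2, 0 < dist z x₀ → dist z x₀ ≤ R → 0 ≤ φ z := by
    intro z h1 h2
    have hlle : Real.log (dist z x₀) ≤ Real.log R := (Real.log_le_log_iff h1 hR0).2 h2
    apply mul_nonneg hccpos.le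
    rw [hlogQdist]; linarith
  have hy₀U : y₀ ∈ U := ⟨hy₀, fun h => absurd (mem_closedBall.mp h) (not_le.2 (by rw [← hddef]; exact hεd))⟩
  have hQne : ∀ z : E2, ε < dist z x₀ → Qc x₀ z ≠ 0 := by
    intro z hz
    rw [Qc_eq_dist]
    have : 0 < dist z x₀ := hε0.trans hz
    positivity
  have stepD : u₀ y₀ - uε ε y₀ ≤ φ y₀ := by
    have hmp := max_principle (U := U) hUo hUb
      (w := fun z => u₀ z - uε ε z - φ z)
      (((h₀c.mono hclU).sub hεc).sub (by
        intro z hz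
        have hzd : ε ≤ dist z x₀ := hUdist z hz
        have hQ : Qc x₀ z ≠ 0 := by
          rw [Qc_eq_dist]
          have : 0 < dist z x₀ := lt_of_lt_of_le hε0 hzd
          positivity
        exact ((continuousAt_const.mul (continuousAt_const.sub
          ((Real.continuousAt_log hQ).comp ((Qc_contDiff x₀).continuous.continuousAt)))).continuousWithinAt)))
      (fun z hz => by
        have hQ : Qc x₀ z ≠ 0 := hQne z (not_le.mp fun h => hz.2 (mem_closedBall.mpr h))
        exact ((h₀2 z (hUsub hz)).sub (hε2 z hz)).sub
          (contDiffAt_const.mul (contDiffAt_const.sub (logQ_contDiffAt hQ))))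
      (fun z hz => by
        have hQ : Qc x₀ z ≠ 0 := hQne z (not_le.mp fun h => hz.2 (mem_closedBall.mpr h))
        have hφlap : lap φ z = 0 := by
          rw [hφdef, lap_const_mul cc (contDiffAt_const.sub (logQ_contDiffAt hQ)),
            lap_const_sub _ (logQ_contDiffAt hQ), lap_logQ hQ]
          ring
        rw [lap_sub (((h₀2 z (hUsub hz)).sub (hε2 z hz)))
            (contDiffAt_const.mul (contDiffAt_const.sub (logQ_contDiffAt hQ))),
          lap_sub (h₀2 z (hUsub hz)) (hε2 z hz), h₀lap z (hUsub hz), hεlap z hz]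
        rw [show lap φ z = 0 from hφlap]
        norm_num)
      (m := 0)
      (fun y hy => by
        show u₀ y - uε ε y - φ y ≤ (0:ℝ)
        have huεy : uε ε y = 0 := hεfr y hy
        rcases hfrU hy with hcase | hcase
        · have hu₀y : u₀ y = 0 := h₀fr y hcase
          have hyΩ : y ∉ Ω := by
            rw [hΩo.frontier_eq] at hcase
            exact hcase.2
          have hyx₀ : y ≠ x₀ := fun h => hyΩ (h ▸ hball (mem_closedBall_self hε₁.le))
          have h1 : 0 < dist y x₀ := dist_pos.2 hyx₀
          have h2 : dist y x₀ ≤ R := by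
            have := hRsub (hfrcl hy)
            rwa [mem_closedBall] at this
          have := hφnonneg y h1 h2
          rw [hu₀y, huεy]
          linarith
        · have hdy : dist y x₀ = ε := mem_sphere.mp hcase
          have hφy : φ y = M := hφsphere y hdy
          have hycl : y ∈ closure Ω := by
            apply subset_closure
            apply hball
            rw [mem_closedBall, hdy]
            exact hεε₁.le
          have := (hu₀bounds y hycl).2
          rw [huεy, hφy]
          linarith)
    have h' : u₀ y₀ - uε ε y₀ - φ y₀ ≤ 0 := hmp y₀ (subset_closure hy₀U)
    linarith
  have hφy₀ : φ y₀ ≤ δ / 2 := by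
    have heq : φ y₀ = A / (2 * Real.log R - 2 * Real.log ε) := by
      show cc * (2 * Real.log R - logQ x₀ y₀) = _
      rw [hlogQdist, ← hddef, hccdef, hAdef]
      rw [div_mul_eq_mul_div]
      congr 1
      ring
    have hle2 : 2 * (A / δ) ≤ 2 * Real.log R - 2 * Real.log ε := by linarith
    have h2Aδ : 0 < 2 * (A / δ) := by positivity
    calc φ y₀ = A / (2 * Real.log R - 2 * Real.log ε) := heq
      _ ≤ A / (2 * (A / δ)) := by gcongr
      _ = δ / 2 := by
        rw [eq_div_iff (by norm_num : (2:ℝ) ≠ 0), div_mul_eq_mul_div,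
          div_eq_iff h2Aδ.ne']
        field_simp
  have stepD' : M - δ / 2 ≤ uε ε y₀ := by
    have : u₀ y₀ = M := rfl
    linarith [stepD, hφy₀]
  -- Conclusion
  rcases lt_or_ge (dist (xε ε) y₀) r with hfin | hfin
  · exact hfin
  · exfalso
    have h1 : u₀ (xε ε) ≤ M - δ := hgap _ (hUsub hxεmem) hfin
    have h2 : uε ε (xε ε) ≤ u₀ (xε ε) := stepC _ (subset_closure hxεmem)
    have h3 : uε ε y₀ ≤ uε ε (xε ε) := isMaxOn_iff.mp hxεmax y₀ hy₀U
    linarith
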